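/- arXiv:math/0603548 — 3 statements merged into one kernel-verified Lean document; each statement's English description precedes it below -/
import Mathlib

section
/- Let n ≥ 2 and let 0 ≤ i ≤ n − 2. For every g in the subgroup H_n of G_BV there exists h in H_{n+1} such that in G_BV either x_i^{−1} g = h, or x_i^{−1} g = h · x_{i'}^{−1} for some 0 ≤ i' ≤ n − 2. Similarly, for every g in H_n there exists h' in H_{n+1} such that either g · x_i = h', or g · x_i = x_{i'} · h' for some 0 ≤ i' ≤ n − 2. -/
/-- Relator corresponding to the equation `u = v`. -/
def grel {α : Type*} (u v : FreeGroup α) : FreeGroup α := u * v⁻¹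

/-- Generators of the braided Thompson group `BV`.  `s i` denotes `σ_{i+1}` and
`t i` denotes `τ_{i+1}` (so that exactly the generators `σ_i, τ_i` with `i ≥ 1` occur). -/
inductive BVGen : Type
  | x : ℕ → BVGen
  | s : ℕ → BVGen
  | t : ℕ → BVGen

namespace BVGen

/-- The free-group letter `x_i`. -/
def X (i : ℕ) : FreeGroup BVGen := FreeGroup.of (BVGen.x i)

/-- The free-group letter `σ_i` (meaningful for `i ≥ 1`). -/
def S (i : ℕ) : FreeGroup BVGen := FreeGroup.of (BVGen.s (i - 1))

/-- The free-group letter `τ_i` (meaningful for `i ≥ 1`). -/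
def T (i : ℕ) : FreeGroup BVGen := FreeGroup.of (BVGen.t (i - 1))

/-- The defining relations of the braided Thompson group `BV`. -/
def bvRels : Set (FreeGroup BVGen) :=
  { g |
    (∃ i j, i < j ∧ g = grel (X j * X i) (X i * X (j + 1))) ∨
    (∃ i j, 1 ≤ i ∧ i + 2 ≤ j ∧ g = grel (S i * S j) (S j * S i)) ∨
    (∃ i, 1 ≤ i ∧ g = grel (S i * S (i + 1) * S i) (S (i + 1) * S i * S (i + 1))) ∨
    (∃ i j, 1 ≤ i ∧ i + 2 ≤ j ∧ g = grel (S i * T j) (T j * S i)) ∨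
    (∃ i, 1 ≤ i ∧ g = grel (S i * T (i + 1) * S i) (T (i + 1) * S i * T (i + 1))) ∨
    (∃ i j, 1 ≤ i ∧ i < j ∧ g = grel (S i * X j) (X j * S i)) ∨
    (∃ i, 1 ≤ i ∧ g = grel (S i * X i) (X (i - 1) * S (i + 1) * S i)) ∨
    (∃ i j, j + 2 ≤ i ∧ g = grel (S i * X j) (X j * S (i + 1))) ∨
    (∃ i, g = grel (S (i + 1) * X i) (X (i + 1) * S (i + 1) * S (i + 2))) ∨
    (∃ i j, j + 2 ≤ i ∧ g = grel (T i * X j) (X j * T (i + 1))) ∨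
    (∃ i, 1 ≤ i ∧ g = grel (T i * X (i - 1)) (S i * T (i + 1))) ∨
    (∃ i, 1 ≤ i ∧ g = grel (T i) (X (i - 1) * T (i + 1) * S i)) }

end BVGen

/-- The braided Thompson group `BV`, given by its infinite presentation. -/
abbrev GBV : Type := PresentedGroup BVGen.bvRels

namespace GBV

/-- The generator `x_i` of `BV`. -/
def xg (i : ℕ) : GBV := PresentedGroup.of (BVGen.x i)

/-- The generator `σ_i` of `BV` (meaningful for `i ≥ 1`). -/
def sg (i : ℕ) : GBV := PresentedGroup.of (BVGen.s (i - 1))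

/-- The generator `τ_i` of `BV` (meaningful for `i ≥ 1`). -/
def tg (i : ℕ) : GBV := PresentedGroup.of (BVGen.t (i - 1))

/-- H_n: the subgroup of `BV` generated by the B_n generators
`σ_1, …, σ_{n-2}, τ_{n-1}`. -/
def Hn (n : ℕ) : Subgroup GBV :=
  Subgroup.closure ({g | ∃ i, 1 ≤ i ∧ i + 2 ≤ n ∧ g = sg i} ∪ {tg (n - 1)})

end GBV

namespace GBV

open BVGen

/-- Generic push lemma: from `a * x = x' * b` deduce `x'⁻¹ * a = b * x⁻¹`. -/
private theorem push {G : Type*} [Group G] {a x x' b : G} (h : a * x = x' * b) :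
    x'⁻¹ * a = b * x⁻¹ := by
  have := congrArg (fun z => x'⁻¹ * z * x⁻¹) h
  simpa [mul_assoc] using this

/-- Generic push lemma for inverses: from `a * x = x' * b` deduce `x⁻¹ * a⁻¹ = b⁻¹ * x'⁻¹`. -/
private theorem pushv {G : Type*} [Group G] {a x x' b : G} (h : a * x = x' * b) :
    x⁻¹ * a⁻¹ = b⁻¹ * x'⁻¹ := by
  rw [← mul_inv_rev, h, mul_inv_rev]

private theorem mk_rel {u v : FreeGroup BVGen} (h : grel u v ∈ BVGen.bvRels) :
    (QuotientGroup.mk u : GBV) = QuotientGroup.mk v := by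
  have h1 : (QuotientGroup.mk (grel u v) : GBV) = 1 :=
    (QuotientGroup.eq_one_iff _).2 (Subgroup.subset_normalClosure h)
  rw [grel, QuotientGroup.mk_mul, QuotientGroup.mk_inv, mul_inv_eq_one] at h1
  exact h1

private theorem mkX (i : ℕ) : (QuotientGroup.mk (X i) : GBV) = xg i := rfl
private theorem mkS (i : ℕ) : (QuotientGroup.mk (S i) : GBV) = sg i := rfl
private theorem mkT (i : ℕ) : (QuotientGroup.mk (T i) : GBV) = tg i := rfl

private theorem relC1 {i j : ℕ} (h1 : 1 ≤ i) (h2 : i < j) : sg i * xg j = xg j * sg i := by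
  have := mk_rel (Or.inr <| Or.inr <| Or.inr <| Or.inr <| Or.inr <| Or.inl
    ⟨i, j, h1, h2, rfl⟩)
  simp only [QuotientGroup.mk_mul, mkX, mkS, mkT] at this
  exact this

private theorem relC2 {i : ℕ} (h1 : 1 ≤ i) : sg i * xg i = xg (i - 1) * sg (i + 1) * sg i := by
  have := mk_rel (Or.inr <| Or.inr <| Or.inr <| Or.inr <| Or.inr <| Or.inr <| Or.inl
    ⟨i, h1, rfl⟩)
  simp only [QuotientGroup.mk_mul, mkX, mkS, mkT] at this
  exact this

private theorem relC3 {i j : ℕ} (h : j + 2 ≤ i) : sg i * xg j = xg j * sg (i + 1) := by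
  have := mk_rel (Or.inr <| Or.inr <| Or.inr <| Or.inr <| Or.inr <| Or.inr <| Or.inr <|
    Or.inl ⟨i, j, h, rfl⟩)
  simp only [QuotientGroup.mk_mul, mkX, mkS, mkT] at this
  exact this

private theorem relC4 (i : ℕ) : sg (i + 1) * xg i = xg (i + 1) * sg (i + 1) * sg (i + 2) := by
  have := mk_rel (Or.inr <| Or.inr <| Or.inr <| Or.inr <| Or.inr <| Or.inr <| Or.inr <|
    Or.inr <| Or.inl ⟨i, rfl⟩)
  simp only [QuotientGroup.mk_mul, mkX, mkS, mkT] at this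
  exact this

private theorem relD1 {i j : ℕ} (h : j + 2 ≤ i) : tg i * xg j = xg j * tg (i + 1) := by
  have := mk_rel (Or.inr <| Or.inr <| Or.inr <| Or.inr <| Or.inr <| Or.inr <| Or.inr <|
    Or.inr <| Or.inr <| Or.inl ⟨i, j, h, rfl⟩)
  simp only [QuotientGroup.mk_mul, mkX, mkS, mkT] at this
  exact this

private theorem relD2 {i : ℕ} (h : 1 ≤ i) : tg i * xg (i - 1) = sg i * tg (i + 1) := by
  have := mk_rel (Or.inr <| Or.inr <| Or.inr <| Or.inr <| Or.inr <| Or.inr <| Or.inr <|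
    Or.inr <| Or.inr <| Or.inr <| Or.inl ⟨i, h, rfl⟩)
  simp only [QuotientGroup.mk_mul, mkX, mkS, mkT] at this
  exact this

private theorem relD3 {i : ℕ} (h : 1 ≤ i) : tg i = xg (i - 1) * tg (i + 1) * sg i := by
  have := mk_rel (Or.inr <| Or.inr <| Or.inr <| Or.inr <| Or.inr <| Or.inr <| Or.inr <|
    Or.inr <| Or.inr <| Or.inr <| Or.inr ⟨i, h, rfl⟩)
  simp only [QuotientGroup.mk_mul, mkX, mkS, mkT] at this
  exact this

private theorem sg_mem {n j : ℕ} (h1 : 1 ≤ j) (h2 : j + 2 ≤ n) : sg j ∈ Hn n :=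
  Subgroup.subset_closure (Or.inl ⟨j, h1, h2, rfl⟩)

private theorem tg_mem (n : ℕ) : tg (n - 1) ∈ Hn n :=
  Subgroup.subset_closure (Or.inr rfl)

private theorem tg_mem' (m : ℕ) : tg (m + 2) ∈ Hn (m + 3) := by
  have h := tg_mem (m + 3)
  rwa [show m + 3 - 1 = m + 2 by omega] at h

/-- The key predicate: `w` is `h` or `h * x_k⁻¹` with `h ∈ H_{m+3}` and `k ≤ m`. -/
private def Gd (m : ℕ) (w : GBV) : Prop :=
  ∃ h ∈ Hn (m + 3), w = h ∨ ∃ k ≤ m, w = h * (xg k)⁻¹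

private theorem gd_mul {m : ℕ} {a b : GBV} (ha : Gd m a) (hb : Gd m b)
    (hb' : ∀ k ≤ m, Gd m ((xg k)⁻¹ * b)) : Gd m (a * b) := by
  obtain ⟨h₁, hh₁, hc₁⟩ := ha
  rcases hc₁ with heq₁ | ⟨k₁, hk₁, heq₁⟩
  · obtain ⟨h₂, hh₂, hc₂⟩ := hb
    rcases hc₂ with heq₂ | ⟨k₂, hk₂, heq₂⟩
    · exact ⟨h₁ * h₂, mul_mem hh₁ hh₂, Or.inl (by rw [heq₁, heq₂])⟩
    · refine ⟨h₁ * h₂, mul_mem hh₁ hh₂, Or.inr ⟨k₂, hk₂, ?_⟩⟩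
      rw [heq₁, heq₂]
      exact (mul_assoc _ _ _).symm
  · obtain ⟨h₂, hh₂, hc₂⟩ := hb' k₁ hk₁
    rcases hc₂ with heq₂ | ⟨k₂, hk₂, heq₂⟩
    · refine ⟨h₁ * h₂, mul_mem hh₁ hh₂, Or.inl ?_⟩
      rw [heq₁, mul_assoc, heq₂]
    · refine ⟨h₁ * h₂, mul_mem hh₁ hh₂, Or.inr ⟨k₂, hk₂, ?_⟩⟩
      rw [heq₁, mul_assoc, heq₂]
      exact (mul_assoc _ _ _).symm

/-- Base step for the single generator `σ_j`. -/
private theorem step_s {m j k : ℕ} (h1 : 1 ≤ j) (hj : j ≤ m) (hk : k ≤ m) :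
    Gd m ((xg k)⁻¹ * sg j) := by
  rcases Nat.lt_or_ge j k with hlt | hge
  · -- j < k : commute
    exact ⟨sg j, sg_mem h1 (by omega), Or.inr ⟨k, hk, push (relC1 h1 hlt)⟩⟩
  rcases eq_or_ne j k with hEq | hne
  · -- j = k ≥ 1
    subst hEq
    obtain ⟨k', rfl⟩ : ∃ k', j = k' + 1 := ⟨j - 1, by omega⟩
    have h := relC4 k'
    rw [mul_assoc] at h
    exact ⟨sg (k' + 1) * sg (k' + 2),
      mul_mem (sg_mem (by omega) (by omega)) (sg_mem (by omega) (by omega)),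
      Or.inr ⟨k', by omega, push h⟩⟩
  rcases eq_or_ne j (k + 1) with hEq | hne2
  · -- j = k + 1
    subst hEq
    have h := relC2 (i := k + 1) (by omega)
    rw [show k + 1 - 1 = k by omega, mul_assoc] at h
    exact ⟨sg (k + 2) * sg (k + 1),
      mul_mem (sg_mem (by omega) (by omega)) (sg_mem (by omega) (by omega)),
      Or.inr ⟨k + 1, by omega, push h⟩⟩
  · -- j ≥ k + 2
    exact ⟨sg (j + 1), sg_mem (by omega) (by omega),
      Or.inr ⟨k, hk, push (relC3 (by omega))⟩⟩

/-- Base step for `σ_j⁻¹`. -/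
private theorem step_sinv {m j k : ℕ} (h1 : 1 ≤ j) (hj : j ≤ m) (hk : k ≤ m) :
    Gd m ((xg k)⁻¹ * (sg j)⁻¹) := by
  rcases Nat.lt_or_ge j k with hlt | hge
  · exact ⟨(sg j)⁻¹, inv_mem (sg_mem h1 (by omega)),
      Or.inr ⟨k, hk, pushv (relC1 h1 hlt)⟩⟩
  rcases eq_or_ne j k with hEq | hne
  · subst hEq
    obtain ⟨k', rfl⟩ : ∃ k', j = k' + 1 := ⟨j - 1, by omega⟩
    have h := relC2 (i := k' + 1) (by omega)
    rw [show k' + 1 - 1 = k' by omega, mul_assoc] at h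
    exact ⟨(sg (k' + 2) * sg (k' + 1))⁻¹,
      inv_mem (mul_mem (sg_mem (by omega) (by omega)) (sg_mem (by omega) (by omega))),
      Or.inr ⟨k', by omega, pushv h⟩⟩
  rcases eq_or_ne j (k + 1) with hEq | hne2
  · subst hEq
    have h := relC4 k
    rw [mul_assoc] at h
    exact ⟨(sg (k + 1) * sg (k + 2))⁻¹,
      inv_mem (mul_mem (sg_mem (by omega) (by omega)) (sg_mem (by omega) (by omega))),
      Or.inr ⟨k + 1, by omega, pushv h⟩⟩
  · exact ⟨(sg (j + 1))⁻¹, inv_mem (sg_mem (by omega) (by omega)),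
      Or.inr ⟨k, hk, pushv (relC3 (by omega))⟩⟩

/-- Base step for `τ_{m+1}`. -/
private theorem step_t {m k : ℕ} (hk : k ≤ m) : Gd m ((xg k)⁻¹ * tg (m + 1)) := by
  rcases eq_or_ne k m with hEq | hne
  · -- k = m : use D3
    subst hEq
    have h := relD3 (i := k + 1) (by omega)
    rw [show k + 1 - 1 = k by omega, mul_assoc] at h
    refine ⟨tg (k + 2) * sg (k + 1),
      mul_mem (tg_mem' k) (sg_mem (by omega) (by omega)), Or.inl ?_⟩
    rw [h, inv_mul_cancel_left]
  · -- k < m : use D1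
    exact ⟨tg (m + 2), tg_mem' m,
      Or.inr ⟨k, hk, push (relD1 (i := m + 1) (j := k) (by omega))⟩⟩

/-- Base step for `τ_{m+1}⁻¹`. -/
private theorem step_tinv {m k : ℕ} (hk : k ≤ m) : Gd m ((xg k)⁻¹ * (tg (m + 1))⁻¹) := by
  rcases eq_or_ne k m with hEq | hne
  · -- k = m : use D2
    subst hEq
    have h := relD2 (i := k + 1) (by omega)
    rw [show k + 1 - 1 = k by omega] at h
    refine ⟨(sg (k + 1) * tg (k + 2))⁻¹,
      inv_mem (mul_mem (sg_mem (by omega) (by omega)) (tg_mem' k)), Or.inl ?_⟩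
    rw [← mul_inv_rev, h]
  · exact ⟨(tg (m + 2))⁻¹, inv_mem (tg_mem' m),
      Or.inr ⟨k, hk, pushv (relD1 (i := m + 1) (j := k) (by omega))⟩⟩

/-- `τ_{m+1}` itself. -/
private theorem gd_t {m : ℕ} : Gd m (tg (m + 1)) := by
  have h := relD2 (i := m + 1) (by omega)
  rw [show m + 1 - 1 = m by omega] at h
  exact ⟨sg (m + 1) * tg (m + 2),
    mul_mem (sg_mem (by omega) (by omega)) (tg_mem' m),
    Or.inr ⟨m, le_refl m, eq_mul_inv_of_mul_eq h⟩⟩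

/-- `τ_{m+1}⁻¹` itself. -/
private theorem gd_tinv {m : ℕ} : Gd m ((tg (m + 1))⁻¹) := by
  have h := relD3 (i := m + 1) (by omega)
  rw [show m + 1 - 1 = m by omega] at h
  refine ⟨(sg (m + 1))⁻¹ * (tg (m + 2))⁻¹,
    mul_mem (inv_mem (sg_mem (by omega) (by omega))) (inv_mem (tg_mem' m)),
    Or.inr ⟨m, le_refl m, ?_⟩⟩
  rw [h]
  group

private theorem key (m : ℕ) : ∀ g ∈ Hn (m + 2),
    Gd m g ∧ ∀ k ≤ m, Gd m ((xg k)⁻¹ * g) := by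
  intro g hg
  have hg' : g ∈ Submonoid.closure
      (({g | ∃ i, 1 ≤ i ∧ i + 2 ≤ m + 2 ∧ g = sg i} ∪ {tg (m + 2 - 1)}) ∪
       ({g | ∃ i, 1 ≤ i ∧ i + 2 ≤ m + 2 ∧ g = sg i} ∪ {tg (m + 2 - 1)})⁻¹) := by
    rw [← Subgroup.closure_toSubmonoid]
    exact hg
  clear hg
  induction hg' using Submonoid.closure_induction with
  | one =>
    refine ⟨⟨1, one_mem _, Or.inl rfl⟩, fun k hk =>
      ⟨1, one_mem _, Or.inr ⟨k, hk, by rw [one_mul, mul_one]⟩⟩⟩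
  | mul a b _ _ ha hb =>
    refine ⟨gd_mul ha.1 hb.1 hb.2, fun k hk => ?_⟩
    rw [← mul_assoc]
    exact gd_mul (ha.2 k hk) hb.1 hb.2
  | mem y hy =>
    have hy' : (∃ i, 1 ≤ i ∧ i ≤ m ∧ (y = sg i ∨ y = (sg i)⁻¹)) ∨
        y = tg (m + 1) ∨ y = (tg (m + 1))⁻¹ := by
      have hmm : m + 2 - 1 = m + 1 := by omega
      rcases hy with hy | hy
      · rcases hy with ⟨i, ha1, ha2, rfl⟩ | hy
        · exact Or.inl ⟨i, ha1, by omega, Or.inl rfl⟩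
        · exact Or.inr (Or.inl (by rw [hy, hmm]))
      · rw [Set.mem_inv] at hy
        rcases hy with ⟨i, ha1, ha2, hEq⟩ | hy
        · exact Or.inl ⟨i, ha1, by omega, Or.inr (by rw [← hEq, inv_inv])⟩
        · have h2 : y⁻¹ = tg (m + 2 - 1) := hy
          rw [hmm] at h2
          exact Or.inr (Or.inr (by rw [← h2, inv_inv]))
    rcases hy' with ⟨j, h1, hj, hc⟩ | hy' | hy'
    · rcases hc with rfl | rfl
      · exact ⟨⟨sg j, sg_mem h1 (by omega), Or.inl rfl⟩, fun k hk => step_s h1 hj hk⟩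
      · exact ⟨⟨(sg j)⁻¹, inv_mem (sg_mem h1 (by omega)), Or.inl rfl⟩,
          fun k hk => step_sinv h1 hj hk⟩
    · subst hy'
      exact ⟨gd_t, fun k hk => step_t hk⟩
    · subst hy'
      exact ⟨gd_tinv, fun k hk => step_tinv hk⟩

end GBV

/-- Lemma (push): for `n ≥ 2` and `0 ≤ i ≤ n-2`, every `x_i⁻¹ g` with `g ∈ H_n`
equals `h` or `h * x_{i'}⁻¹` with `h ∈ H_{n+1}` and `i' ≤ n-2`; similarly on the right. -/
theorem bv_push (n : ℕ) (hn : 2 ≤ n) (i : ℕ) (hi : i ≤ n - 2) :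
    (∀ g ∈ GBV.Hn n, ∃ h ∈ GBV.Hn (n + 1),
      (GBV.xg i)⁻¹ * g = h ∨ ∃ i', i' ≤ n - 2 ∧ (GBV.xg i)⁻¹ * g = h * (GBV.xg i')⁻¹) ∧
    (∀ g ∈ GBV.Hn n, ∃ h' ∈ GBV.Hn (n + 1),
      g * GBV.xg i = h' ∨ ∃ i', i' ≤ n - 2 ∧ g * GBV.xg i = GBV.xg i' * h') := by
  obtain ⟨m, rfl⟩ : ∃ m, n = m + 2 := ⟨n - 2, by omega⟩
  have hi' : i ≤ m := by omega
  constructor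
  · intro g hg
    obtain ⟨_, Ck⟩ := GBV.key m g hg
    obtain ⟨h, hh, hc⟩ := Ck i hi'
    refine ⟨h, by simpa using hh, ?_⟩
    rcases hc with hc | ⟨i', hi2, hc⟩
    · exact Or.inl hc
    · exact Or.inr ⟨i', by omega, hc⟩
  · intro g hg
    obtain ⟨_, Ck⟩ := GBV.key m g⁻¹ (inv_mem hg)
    obtain ⟨h, hh, hc⟩ := Ck i hi'
    refine ⟨h⁻¹, by simpa using inv_mem hh, ?_⟩
    rcases hc with hc | ⟨i', hi2, hc⟩
    · left
      have := congrArg (·⁻¹) hc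
      simpa [mul_inv_rev] using this
    · right
      refine ⟨i', by omega, ?_⟩
      have := congrArg (·⁻¹) hc
      simpa [mul_inv_rev] using this
end

section
/- Let n ≥ 2. For every g in the subgroup H_n of G_BV there exists h in H_{n+1} such that in G_BV either g = h, or g = h · x_i^{−1} for some 0 ≤ i ≤ n − 2. Similarly, for every g in H_n there exists h' in H_{n+1} such that either g = h', or g = x_i · h' for some 0 ≤ i ≤ n − 2. -/
section BVAux

open BVGen GBV

/-- The projection from the free group to `GBV`. -/
private def prj : FreeGroup BVGen →* GBV := QuotientGroup.mk' _

private lemma prj_rel {u v : FreeGroup BVGen} (h : grel u v ∈ BVGen.bvRels) :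
    prj u = prj v := by
  have h1 : prj (grel u v) = 1 :=
    (QuotientGroup.eq_one_iff _).mpr (Subgroup.subset_normalClosure h)
  have h2 : prj u * (prj v)⁻¹ = 1 := by
    simpa only [grel, map_mul, map_inv] using h1
  exact mul_inv_eq_one.mp h2

private lemma rC1 (i j : ℕ) (h1 : 1 ≤ i) (h2 : i < j) : sg i * xg j = xg j * sg i := by
  have := prj_rel (show grel (S i * X j) (X j * S i) ∈ BVGen.bvRels from
    Or.inr (Or.inr (Or.inr (Or.inr (Or.inr (Or.inl ⟨i, j, h1, h2, rfl⟩))))))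
  simp only [map_mul] at this
  exact this

private lemma rC2' (i : ℕ) : sg (i + 1) * xg (i + 1) = xg i * sg (i + 2) * sg (i + 1) := by
  have := prj_rel (show grel (S (i+1) * X (i+1)) (X i * S (i+2) * S (i+1)) ∈ BVGen.bvRels from
    Or.inr (Or.inr (Or.inr (Or.inr (Or.inr (Or.inr (Or.inl ⟨i + 1, by omega, rfl⟩)))))))
  simp only [map_mul] at this
  exact this

private lemma rC3 (i j : ℕ) (h : j + 2 ≤ i) : sg i * xg j = xg j * sg (i + 1) := by
  have := prj_rel (show grel (S i * X j) (X j * S (i+1)) ∈ BVGen.bvRels from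
    Or.inr (Or.inr (Or.inr (Or.inr (Or.inr (Or.inr (Or.inr (Or.inl ⟨i, j, h, rfl⟩))))))))
  simp only [map_mul] at this
  exact this

private lemma rC4 (i : ℕ) : sg (i + 1) * xg i = xg (i + 1) * sg (i + 1) * sg (i + 2) := by
  have := prj_rel (show grel (S (i+1) * X i) (X (i+1) * S (i+1) * S (i+2)) ∈ BVGen.bvRels from
    Or.inr (Or.inr (Or.inr (Or.inr (Or.inr (Or.inr (Or.inr (Or.inr (Or.inl ⟨i, rfl⟩)))))))))
  simp only [map_mul] at this
  exact this

private lemma rD1 (i j : ℕ) (h : j + 2 ≤ i) : tg i * xg j = xg j * tg (i + 1) := by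
  have := prj_rel (show grel (T i * X j) (X j * T (i+1)) ∈ BVGen.bvRels from
    Or.inr (Or.inr (Or.inr (Or.inr (Or.inr (Or.inr (Or.inr (Or.inr (Or.inr (Or.inl ⟨i, j, h, rfl⟩))))))))))
  simp only [map_mul] at this
  exact this

private lemma rD2' (i : ℕ) : tg (i + 1) * xg i = sg (i + 1) * tg (i + 2) := by
  have := prj_rel (show grel (T (i+1) * X i) (S (i+1) * T (i+2)) ∈ BVGen.bvRels from
    Or.inr (Or.inr (Or.inr (Or.inr (Or.inr (Or.inr (Or.inr (Or.inr (Or.inr (Or.inr (Or.inl ⟨i + 1, by omega, rfl⟩)))))))))))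
  simp only [map_mul] at this
  exact this

private lemma rD3' (i : ℕ) : tg (i + 1) = xg i * tg (i + 2) * sg (i + 1) := by
  have := prj_rel (show grel (T (i+1)) (X i * T (i+2) * S (i+1)) ∈ BVGen.bvRels from
    Or.inr (Or.inr (Or.inr (Or.inr (Or.inr (Or.inr (Or.inr (Or.inr (Or.inr (Or.inr (Or.inr ⟨i + 1, by omega, rfl⟩)))))))))))
  simp only [map_mul] at this
  exact this

private lemma shuf1 {a b x y : GBV} (h : a * y = x * b) : x⁻¹ * a = b * y⁻¹ := by
  have h2 : a = x * b * y⁻¹ := by rw [← h]; group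
  rw [h2]; group

private lemma shuf2 {a b x y : GBV} (h : a * x = y * b) : x⁻¹ * a⁻¹ = b⁻¹ * y⁻¹ := by
  have h2 : a = y * b * x⁻¹ := by rw [← h]; group
  rw [h2]; group

private lemma mem_s {N k : ℕ} (h1 : 1 ≤ k) (h2 : k + 2 ≤ N) : sg k ∈ GBV.Hn N :=
  Subgroup.subset_closure (Set.mem_union_left _ ⟨k, h1, h2, rfl⟩)

private lemma mem_t (N : ℕ) : tg (N - 1) ∈ GBV.Hn N :=
  Subgroup.subset_closure (Set.mem_union_right _ rfl)

private lemma bv_base (m : ℕ) (a : GBV)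
    (ha : (∃ k, 1 ≤ k ∧ k ≤ m ∧ (a = sg k ∨ a = (sg k)⁻¹)) ∨
      a = tg (m + 1) ∨ a = (tg (m + 1))⁻¹) :
    ∃ h ∈ GBV.Hn (m + 3), a = h ∨ ∃ j, j ≤ m ∧ a = h * (xg j)⁻¹ := by
  rcases ha with ⟨k, hk1, hkm, hs | hs⟩ | ht | ht
  · exact ⟨sg k, mem_s hk1 (by omega), Or.inl hs⟩
  · exact ⟨(sg k)⁻¹, inv_mem (mem_s hk1 (by omega)), Or.inl hs⟩
  · refine ⟨sg (m + 1) * tg (m + 2), mul_mem (mem_s (by omega) (by omega)) (mem_t (m + 3)),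
      Or.inr ⟨m, le_refl m, ?_⟩⟩
    rw [ht, ← rD2' m]; group
  · refine ⟨(sg (m + 1))⁻¹ * (tg (m + 2))⁻¹,
      mul_mem (inv_mem (mem_s (by omega) (by omega))) (inv_mem (mem_t (m + 3))),
      Or.inr ⟨m, le_refl m, ?_⟩⟩
    rw [ht, rD3' m]; group

private lemma bv_push_s1 (m i : ℕ) (him : i ≤ m) (a : GBV)
    (ha : (∃ k, 1 ≤ k ∧ k ≤ m ∧ (a = sg k ∨ a = (sg k)⁻¹)) ∨
      a = tg (m + 1) ∨ a = (tg (m + 1))⁻¹) :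
    ∃ h ∈ GBV.Hn (m + 3), (xg i)⁻¹ * a = h ∨ ∃ j, j ≤ m ∧ (xg i)⁻¹ * a = h * (xg j)⁻¹ := by
  rcases ha with ⟨k, hk1, hkm, hs | hs⟩ | ht | ht
  · -- a = sg k
    subst hs
    rcases Nat.lt_trichotomy k i with hki | rfl | hik
    · exact ⟨sg k, mem_s hk1 (by omega), Or.inr ⟨i, him, shuf1 (rC1 k i hk1 hki)⟩⟩
    · -- k = i
      obtain ⟨i', rfl⟩ : ∃ i', k = i' + 1 := ⟨k - 1, by omega⟩
      have hrel : sg (i' + 1) * xg i' = xg (i' + 1) * (sg (i' + 1) * sg (i' + 2)) := by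
        rw [rC4 i', mul_assoc]
      exact ⟨sg (i' + 1) * sg (i' + 2),
        mul_mem (mem_s (by omega) (by omega)) (mem_s (by omega) (by omega)),
        Or.inr ⟨i', by omega, shuf1 hrel⟩⟩
    · rcases Nat.lt_or_ge (i + 1) k with h2 | h2
      · -- k ≥ i + 2
        exact ⟨sg (k + 1), mem_s (by omega) (by omega),
          Or.inr ⟨i, him, shuf1 (rC3 k i (by omega))⟩⟩
      · -- k = i + 1
        have hk : k = i + 1 := by omega
        subst hk
        have hrel : sg (i + 1) * xg (i + 1) = xg i * (sg (i + 2) * sg (i + 1)) := by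
          rw [rC2' i, mul_assoc]
        exact ⟨sg (i + 2) * sg (i + 1),
          mul_mem (mem_s (by omega) (by omega)) (mem_s (by omega) (by omega)),
          Or.inr ⟨i + 1, by omega, shuf1 hrel⟩⟩
  · -- a = (sg k)⁻¹
    subst hs
    rcases Nat.lt_trichotomy k i with hki | rfl | hik
    · exact ⟨(sg k)⁻¹, inv_mem (mem_s hk1 (by omega)),
        Or.inr ⟨i, him, shuf2 (rC1 k i hk1 hki)⟩⟩
    · obtain ⟨i', rfl⟩ : ∃ i', k = i' + 1 := ⟨k - 1, by omega⟩
      have hrel : sg (i' + 1) * xg (i' + 1) = xg i' * (sg (i' + 2) * sg (i' + 1)) := by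
        rw [rC2' i', mul_assoc]
      exact ⟨(sg (i' + 2) * sg (i' + 1))⁻¹,
        inv_mem (mul_mem (mem_s (by omega) (by omega)) (mem_s (by omega) (by omega))),
        Or.inr ⟨i', by omega, shuf2 hrel⟩⟩
    · rcases Nat.lt_or_ge (i + 1) k with h2 | h2
      · exact ⟨(sg (k + 1))⁻¹, inv_mem (mem_s (by omega) (by omega)),
          Or.inr ⟨i, him, shuf2 (rC3 k i (by omega))⟩⟩
      · have hk : k = i + 1 := by omega
        subst hk
        have hrel : sg (i + 1) * xg i = xg (i + 1) * (sg (i + 1) * sg (i + 2)) := by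
          rw [rC4 i, mul_assoc]
        exact ⟨(sg (i + 1) * sg (i + 2))⁻¹,
          inv_mem (mul_mem (mem_s (by omega) (by omega)) (mem_s (by omega) (by omega))),
          Or.inr ⟨i + 1, by omega, shuf2 hrel⟩⟩
  · -- a = tg (m+1)
    subst ht
    rcases Nat.lt_or_ge i m with hlt | hge
    · exact ⟨tg (m + 2), mem_t (m + 3),
        Or.inr ⟨i, him, shuf1 (rD1 (m + 1) i (by omega))⟩⟩
    · rw [show i = m from by omega]
      refine ⟨tg (m + 2) * sg (m + 1),
        mul_mem (mem_t (m + 3)) (mem_s (by omega) (by omega)), Or.inl ?_⟩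
      rw [rD3' m]; group
  · -- a = (tg (m+1))⁻¹
    subst ht
    rcases Nat.lt_or_ge i m with hlt | hge
    · exact ⟨(tg (m + 2))⁻¹, inv_mem (mem_t (m + 3)),
        Or.inr ⟨i, him, shuf2 (rD1 (m + 1) i (by omega))⟩⟩
    · rw [show i = m from by omega]
      refine ⟨(tg (m + 2))⁻¹ * (sg (m + 1))⁻¹,
        mul_mem (inv_mem (mem_t (m + 3))) (inv_mem (mem_s (by omega) (by omega))), Or.inl ?_⟩
      have h2 : tg (m + 1) = sg (m + 1) * tg (m + 2) * (xg m)⁻¹ := by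
        rw [← rD2' m]; group
      rw [h2]; group

private lemma bv_pump_half (m : ℕ) :
    ∀ g ∈ GBV.Hn (m + 2), ∃ h ∈ GBV.Hn (m + 3),
      g = h ∨ ∃ i, i ≤ m ∧ g = h * (xg i)⁻¹ := by
  intro g hg
  have hg' : g ∈ Submonoid.closure
      (({g | ∃ i, 1 ≤ i ∧ i + 2 ≤ m + 2 ∧ g = sg i} ∪ {tg (m + 2 - 1)} : Set GBV) ∪
        ({g | ∃ i, 1 ≤ i ∧ i + 2 ≤ m + 2 ∧ g = sg i} ∪ {tg (m + 2 - 1)})⁻¹) := by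
    rw [← Subgroup.closure_toSubmonoid]
    exact hg
  obtain ⟨l, hl, rfl⟩ := Submonoid.exists_list_of_mem_closure hg'
  clear hg hg'
  induction l using List.reverseRecOn with
  | nil => exact ⟨1, one_mem _, Or.inl (by simp)⟩
  | append_singleton l a ih =>
    have hl' : ∀ y ∈ l, y ∈ _ := fun y hy => hl y (List.mem_append_left _ hy)
    have haa := hl a (by simp)
    obtain ⟨h0, hh0, hc⟩ := ih hl'
    have ha' : (∃ k, 1 ≤ k ∧ k ≤ m ∧ (a = sg k ∨ a = (sg k)⁻¹)) ∨
        a = tg (m + 1) ∨ a = (tg (m + 1))⁻¹ := by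
      simp only [Set.mem_union, Set.mem_inv, Set.mem_setOf_eq, Set.mem_singleton_iff] at haa
      rcases haa with (⟨k, hk1, hk2, hv⟩ | hv) | (⟨k, hk1, hk2, hv⟩ | hv)
      · exact Or.inl ⟨k, hk1, by omega, Or.inl hv⟩
      · exact Or.inr (Or.inl hv)
      · exact Or.inl ⟨k, hk1, by omega, Or.inr (inv_eq_iff_eq_inv.mp hv)⟩
      · exact Or.inr (Or.inr (inv_eq_iff_eq_inv.mp hv))
    rw [List.prod_append, List.prod_singleton]
    rcases hc with hch | ⟨i, him, hgi⟩
    · obtain ⟨h2, hh2, hc2⟩ := bv_base m a ha'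
      rcases hc2 with hceq | ⟨j, hj, hceq⟩
      · exact ⟨h0 * h2, mul_mem hh0 hh2, Or.inl (by rw [hch, hceq])⟩
      · exact ⟨h0 * h2, mul_mem hh0 hh2,
          Or.inr ⟨j, hj, by rw [hch, hceq, mul_assoc]⟩⟩
    · obtain ⟨h2, hh2, hc2⟩ := bv_push_s1 m i him a ha'
      rcases hc2 with hceq | ⟨j, hj, hceq⟩
      · exact ⟨h0 * h2, mul_mem hh0 hh2, Or.inl (by rw [hgi, mul_assoc, hceq])⟩
      · exact ⟨h0 * h2, mul_mem hh0 hh2,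
          Or.inr ⟨j, hj, by rw [hgi, mul_assoc, hceq, ← mul_assoc]⟩⟩

end BVAux

/-- Lemma (pumping): for `n ≥ 2`, every `g ∈ H_n` equals `h` or `h * x_i⁻¹`
with `h ∈ H_{n+1}` and `i ≤ n-2`; similarly `g = h'` or `g = x_i * h'`. -/
theorem bv_pumping (n : ℕ) (hn : 2 ≤ n) :
    (∀ g ∈ GBV.Hn n, ∃ h ∈ GBV.Hn (n + 1),
      g = h ∨ ∃ i, i ≤ n - 2 ∧ g = h * (GBV.xg i)⁻¹) ∧
    (∀ g ∈ GBV.Hn n, ∃ h' ∈ GBV.Hn (n + 1),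
      g = h' ∨ ∃ i, i ≤ n - 2 ∧ g = GBV.xg i * h') := by
  obtain ⟨m, rfl⟩ : ∃ m, n = m + 2 := ⟨n - 2, by omega⟩
  constructor
  · intro g hg
    obtain ⟨h, hh, hc⟩ := bv_pump_half m g hg
    refine ⟨h, hh, ?_⟩
    rcases hc with h1 | ⟨i, hi, h2⟩
    · exact Or.inl h1
    · exact Or.inr ⟨i, by omega, h2⟩
  · intro g hg
    obtain ⟨h, hh, hc⟩ := bv_pump_half m g⁻¹ (inv_mem hg)
    rcases hc with h1 | ⟨i, hi, h2⟩
    · exact ⟨h⁻¹, inv_mem hh, Or.inl (by rw [← inv_inv g, h1])⟩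
    · refine ⟨h⁻¹, inv_mem hh, Or.inr ⟨i, by omega, ?_⟩⟩
      have h3 : g = (h * (GBV.xg i)⁻¹)⁻¹ := by rw [← h2, inv_inv]
      rw [h3]; group
end

section
/- Let w = w_1 w_2 w_3^{−1} and v = v_1 v_2 v_3^{−1} be blocks with l(w_3) + l(v_1) ≥ 1. Then there exist blocks w' = w_1' w_2' (w_3')^{−1} and v' = v_1' v_2' (v_3')^{−1} such that the concatenations w v and w' v' represent the same element of G_BV and l(v_1') + l(w_3') < l(v_1) + l(w_3). -/
namespace GBV

/-- `N(u)` for a positive x-word given by its list of indices: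
`N(empty) = 0`, `N(u x_j) = max (N u + 1) (j + 2)`. -/
def Nval (l : List ℕ) : ℕ := l.foldl (fun acc j => max (acc + 1) (j + 2)) 0

/-- The B_n generators, as letters: `σ_1, …, σ_{n-2}, τ_{n-1}`. -/
def BnGen (n : ℕ) : Set BVGen :=
  {g | (∃ i, 1 ≤ i ∧ i + 2 ≤ n ∧ g = BVGen.s (i - 1)) ∨ (2 ≤ n ∧ g = BVGen.t (n - 2))}

/-- A block `w₁ w₂ w₃⁻¹`: `w₁` and `w₃` are positive x-words with nondecreasing
indices (i.e. of the form `x_{i₁}^{r₁} ⋯ x_{i_k}^{r_k}` with `i₁ < ⋯ < i_k`, `r_m ≥ 1`),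
recorded as lists of indices, and `w₂` is a word in the B_n generators and their
inverses (letters with a sign) for some `n ≥ max (N w₁) (N w₃) + 1`. -/
structure Block where
  w1 : List ℕ
  w2 : List (BVGen × Bool)
  w3 : List ℕ
  n : ℕ
  h1 : w1.Chain' (· ≤ ·)
  h3 : w3.Chain' (· ≤ ·)
  h2 : ∀ p ∈ w2, p.1 ∈ BnGen n
  hbound : max (Nval w1) (Nval w3) + 1 ≤ n

/-- Evaluation of a positive x-word in `BV`. -/
def evalX (l : List ℕ) : GBV := (l.map xg).prod

/-- Evaluation of a signed word in the generators in `BV`. -/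
def evalW (l : List (BVGen × Bool)) : GBV :=
  (l.map (fun p => if p.2 then PresentedGroup.of p.1 else (PresentedGroup.of p.1)⁻¹)).prod

/-- The element of `BV` represented by a block. -/
def Block.eval (b : Block) : GBV := evalX b.w1 * evalW b.w2 * (evalX b.w3)⁻¹

end GBV
namespace GBVAux
open GBV BVGen

abbrev Ltr := BVGen × Bool

noncomputable def evalL (p : Ltr) : GBV :=
  if p.2 then PresentedGroup.of p.1 else (PresentedGroup.of p.1)⁻¹

@[simp] lemma evalW_nil : evalW ([] : List Ltr) = 1 := rfl

@[simp] lemma evalW_cons (p : Ltr) (l : List Ltr) :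
    evalW (p :: l) = evalL p * evalW l := by
  simp [evalW, evalL]

@[simp] lemma evalW_append (l₁ l₂ : List Ltr) :
    evalW (l₁ ++ l₂) = evalW l₁ * evalW l₂ := by
  simp [evalW]

@[simp] lemma evalX_nil : evalX ([] : List ℕ) = 1 := rfl

@[simp] lemma evalX_cons (c : ℕ) (l : List ℕ) :
    evalX (c :: l) = xg c * evalX l := by simp [evalX]

@[simp] lemma evalX_append (l₁ l₂ : List ℕ) :
    evalX (l₁ ++ l₂) = evalX l₁ * evalX l₂ := by simp [evalX]

noncomputable def π : FreeGroup BVGen →* GBV := QuotientGroup.mk' _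

lemma pi_of (a : BVGen) : π (FreeGroup.of a) = PresentedGroup.of a := rfl

lemma rel_eq {u v : FreeGroup BVGen} (h : grel u v ∈ BVGen.bvRels) : π u = π v := by
  have h1 : π (grel u v) = 1 := by
    apply (QuotientGroup.eq_one_iff _).mpr
    exact Subgroup.subset_normalClosure h
  rw [grel, map_mul, map_inv] at h1
  exact mul_inv_eq_one.mp h1

noncomputable def Sg (i : ℕ) : GBV := PresentedGroup.of (BVGen.s i)
noncomputable def Tg (i : ℕ) : GBV := PresentedGroup.of (BVGen.t i)

@[simp] lemma evalL_pos (g : BVGen) : evalL (g, true) = PresentedGroup.of g := by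
  simp [evalL]

@[simp] lemma evalL_neg (g : BVGen) : evalL (g, false) = (PresentedGroup.of g)⁻¹ := by
  simp [evalL]

lemma relA {i j : ℕ} (h : i < j) : xg j * xg i = xg i * xg (j + 1) := by
  have := rel_eq (Or.inl ⟨i, j, h, rfl⟩)
  simpa [X, map_mul, pi_of, xg] using this

lemma relC1 {i j : ℕ} (h : i + 1 < j) : Sg i * xg j = xg j * Sg i := by
  have := rel_eq (v := X j * S (i+1)) (Or.inr <| Or.inr <| Or.inr <| Or.inr <| Or.inr <| Or.inl
    ⟨i + 1, j, by omega, h, rfl⟩)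
  simpa [S, X, map_mul, pi_of, xg, Sg] using this

lemma relC2 (i : ℕ) : Sg i * xg (i + 1) = xg i * Sg (i + 1) * Sg i := by
  have := rel_eq (Or.inr <| Or.inr <| Or.inr <| Or.inr <| Or.inr <| Or.inr <| Or.inl
    ⟨i + 1, by omega, rfl⟩)
  simpa [S, X, map_mul, pi_of, xg, Sg] using this

lemma relC3 {i j : ℕ} (h : j + 2 ≤ i + 1) : Sg i * xg j = xg j * Sg (i + 1) := by
  have := rel_eq (Or.inr <| Or.inr <| Or.inr <| Or.inr <| Or.inr <| Or.inr <| Or.inr <| Or.inl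
    ⟨i + 1, j, h, rfl⟩)
  simpa [S, X, map_mul, pi_of, xg, Sg] using this

lemma relC4 (i : ℕ) : Sg i * xg i = xg (i + 1) * Sg i * Sg (i + 1) := by
  have := rel_eq (Or.inr <| Or.inr <| Or.inr <| Or.inr <| Or.inr <| Or.inr <| Or.inr <| Or.inr <|
    Or.inl ⟨i, rfl⟩)
  simpa [S, X, map_mul, pi_of, xg, Sg] using this

lemma relD1 {μ j : ℕ} (h : j + 2 ≤ μ + 1) : Tg μ * xg j = xg j * Tg (μ + 1) := by
  have := rel_eq (Or.inr <| Or.inr <| Or.inr <| Or.inr <| Or.inr <| Or.inr <| Or.inr <| Or.inr <|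
    Or.inr <| Or.inl ⟨μ + 1, j, h, rfl⟩)
  simpa [T, X, map_mul, pi_of, xg, Tg] using this

lemma relD2 (μ : ℕ) : Tg μ * xg μ = Sg μ * Tg (μ + 1) := by
  have := rel_eq (Or.inr <| Or.inr <| Or.inr <| Or.inr <| Or.inr <| Or.inr <| Or.inr <| Or.inr <|
    Or.inr <| Or.inr <| Or.inl ⟨μ + 1, by omega, rfl⟩)
  simpa [S, T, X, map_mul, pi_of, xg, Sg, Tg] using this

lemma relD3 (μ : ℕ) : Tg μ = xg μ * Tg (μ + 1) * Sg μ := by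
  have := rel_eq (Or.inr <| Or.inr <| Or.inr <| Or.inr <| Or.inr <| Or.inr <| Or.inr <| Or.inr <|
    Or.inr <| Or.inr <| Or.inr ⟨μ + 1, by omega, rfl⟩)
  simpa [S, T, X, map_mul, pi_of, xg, Sg, Tg] using this

section GroupHelpers
variable {G : Type*} [Group G]

lemma ginv1 {a b c d e : G} (h : a * b = c * d * e) : a⁻¹ * c = b * e⁻¹ * d⁻¹ := by
  have h2 := congrArg (fun y => a⁻¹ * y * e⁻¹ * d⁻¹) h
  simpa [mul_assoc] using h2.symm

lemma ginv2 {a x b : G} (h : a * x = x * b) : a⁻¹ * x = x * b⁻¹ := by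
  have h2 := congrArg (fun y => a⁻¹ * y * b⁻¹) h
  simpa [mul_assoc] using h2.symm

lemma ginv3 {a b c d : G} (h : a = b * c * d) : a⁻¹ * b = d⁻¹ * c⁻¹ := by
  have h2 := congrArg (fun y => y⁻¹ * b) h
  simpa [mul_assoc] using h2

lemma ginv4 {a b c d : G} (h : a * b = c * d) : a⁻¹ = b * d⁻¹ * c⁻¹ := by
  have h2 := congrArg (fun y => b * y⁻¹) h
  simpa [mul_assoc] using h2

lemma ginv5 {a b c : G} (h : a * b = b * c) : b⁻¹ * a = c * b⁻¹ := by
  have h2 := congrArg (fun y => b⁻¹ * y * b⁻¹) h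
  simpa [mul_assoc] using h2

lemma ctx1 {a b c : G} (h : a * b = c) (y : G) : a * (b * y) = c * y := by
  rw [← mul_assoc, h]

lemma ctx2 {a b c d : G} (h : a * b = c * d) (y : G) : a * (b * y) = c * (d * y) := by
  rw [← mul_assoc, h, mul_assoc]

end GroupHelpers

lemma iC1 {i j : ℕ} (h : i + 1 < j) : (Sg i)⁻¹ * xg j = xg j * (Sg i)⁻¹ := ginv2 (relC1 h)
lemma iC2 (i : ℕ) : (Sg i)⁻¹ * xg (i + 1) = xg i * (Sg (i + 1))⁻¹ * (Sg i)⁻¹ := ginv1 (relC4 i)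
lemma iC3 {i j : ℕ} (h : j + 2 ≤ i + 1) : (Sg i)⁻¹ * xg j = xg j * (Sg (i + 1))⁻¹ := ginv2 (relC3 h)
lemma iC4 (i : ℕ) : (Sg i)⁻¹ * xg i = xg (i + 1) * (Sg i)⁻¹ * (Sg (i + 1))⁻¹ := ginv1 (relC2 i)
lemma iD1 {μ j : ℕ} (h : j + 2 ≤ μ + 1) : (Tg μ)⁻¹ * xg j = xg j * (Tg (μ + 1))⁻¹ := ginv2 (relD1 h)
lemma iD2 (μ : ℕ) : (Tg μ)⁻¹ * xg μ = (Sg μ)⁻¹ * (Tg (μ + 1))⁻¹ := ginv3 (relD3 μ)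
lemma iD3 (μ : ℕ) : (Tg μ)⁻¹ = xg μ * (Tg (μ + 1))⁻¹ * (Sg μ)⁻¹ := ginv4 (relD2 μ)
lemma iA1 {c j : ℕ} (h : c < j) : (xg c)⁻¹ * xg j = xg (j + 1) * (xg c)⁻¹ := ginv5 (relA h)
lemma iA2 {c j : ℕ} (h : j < c) : (xg c)⁻¹ * xg j = xg j * (xg (c + 1))⁻¹ := ginv2 (relA h)

end GBVAux
namespace GBVAux
open GBV BVGen

/-! ### Nfold -/

def Nf (acc j : ℕ) : ℕ := max (acc + 1) (j + 2)

def Nfold (l : List ℕ) (acc : ℕ) : ℕ := l.foldl Nf acc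

lemma Nval_eq_Nfold (l : List ℕ) : Nval l = Nfold l 0 := rfl

@[simp] lemma Nfold_nil (acc : ℕ) : Nfold [] acc = acc := rfl

@[simp] lemma Nfold_cons (c : ℕ) (l : List ℕ) (acc : ℕ) :
    Nfold (c :: l) acc = Nfold l (Nf acc c) := rfl

lemma Nfold_append (l₁ l₂ : List ℕ) (acc : ℕ) :
    Nfold (l₁ ++ l₂) acc = Nfold l₂ (Nfold l₁ acc) := List.foldl_append ..

lemma Nfold_mono (l : List ℕ) : ∀ {acc acc' : ℕ}, acc ≤ acc' → Nfold l acc ≤ Nfold l acc' := by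
  induction l with
  | nil => intro _ _ h; simpa using h
  | cons c l ih =>
    intro acc acc' h
    simp only [Nfold_cons]
    exact ih (by simp only [Nf]; omega)

lemma le_Nfold (l : List ℕ) (acc : ℕ) : acc ≤ Nfold l acc := by
  induction l generalizing acc with
  | nil => simp
  | cons c l ih =>
    simp only [Nfold_cons]
    exact le_trans (by simp only [Nf]; omega) (ih _)

lemma Nfold_sublist {l' l : List ℕ} (h : List.Sublist l' l) : ∀ acc, Nfold l' acc ≤ Nfold l acc := by
  induction h with
  | slnil => intro acc; simp
  | cons c _ ih =>
    intro acc
    exact le_trans (ih acc) (by simp only [Nfold_cons]; exact Nfold_mono _ (by simp only [Nf]; omega))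
  | cons_cons c _ ih => intro acc; simp only [Nfold_cons]; exact ih _

lemma Nfold_map_succ (l : List ℕ) : ∀ {acc acc' : ℕ}, acc' ≤ acc + 1 →
    Nfold (l.map (· + 1)) acc' ≤ Nfold l acc + 1 := by
  induction l with
  | nil => intro _ _ h; simpa using h
  | cons c l ih =>
    intro acc acc' h
    simp only [List.map_cons, Nfold_cons]
    exact ih (by simp only [Nf]; omega)

/-! ### membership in BnGen -/

lemma mem_s {i m : ℕ} (h : i + 3 ≤ m) : (BVGen.s i) ∈ BnGen m :=
  Or.inl ⟨i + 1, by omega, by omega, by simp⟩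

lemma mem_t2 {μ : ℕ} : (BVGen.t (μ + 1)) ∈ BnGen (μ + 3) :=
  Or.inr ⟨by omega, rfl⟩

lemma mem_elim {g : BVGen} {m : ℕ} (hg : g ∈ BnGen m) :
    (∃ i, i + 3 ≤ m ∧ g = BVGen.s i) ∨ (2 ≤ m ∧ g = BVGen.t (m - 2)) := by
  rcases hg with ⟨i, h1, h2, rfl⟩ | ⟨h1, rfl⟩
  · exact Or.inl ⟨i - 1, by omega, by congr 1⟩
  · exact Or.inr ⟨h1, rfl⟩

lemma mem_mono {g : BVGen} {i m : ℕ} (h : g = BVGen.s i) (hg : g ∈ BnGen m) :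
    g ∈ BnGen (m + 1) := by
  rcases mem_elim hg with ⟨i', hi', rfl⟩ | ⟨_, he⟩
  · exact mem_s (by omega)
  · rw [h] at he; cases he

/-! ### crossing a single letter -/

noncomputable def evalO (o : Option ℕ) : GBV := o.elim 1 xg

@[simp] lemma evalO_none : evalO none = 1 := rfl
@[simp] lemma evalO_some (j : ℕ) : evalO (some j) = xg j := rfl

lemma cross {m : ℕ} (p : Ltr) (hp : p.1 ∈ BnGen m) {j : ℕ} (hj : j + 2 ≤ m) :
    ∃ (o : Option ℕ) (u : List Ltr),
      (∀ q ∈ u, q.1 ∈ BnGen (m + 1)) ∧ (∀ j' ∈ o, j' + 2 ≤ m) ∧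
      evalL p * xg j = evalO o * evalW u := by
  obtain ⟨g, b⟩ := p
  rcases mem_elim hp with ⟨i, hi, rfl⟩ | ⟨hm, hg⟩
  · -- σ letter : Sg i = σ_{i+1}
    rcases Nat.lt_trichotomy (i + 1) j with hlt | heq | hgt
    · refine ⟨some j, [(BVGen.s i, b)], ?_, ?_, ?_⟩
      · rintro q hq; simp at hq; subst hq; exact mem_s (by omega)
      · rintro j' hj'; simp at hj'; omega
      · cases b <;> simp [Sg] <;>
          [simpa [Sg, mul_assoc] using iC1 hlt; simpa [Sg, mul_assoc] using relC1 hlt]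
    · -- j = i + 1
      subst heq
      refine ⟨some i, [(BVGen.s (i + 1), b), (BVGen.s i, b)], ?_, ?_, ?_⟩
      · rintro q hq; simp at hq
        rcases hq with h | h <;> subst h <;> exact mem_s (by omega)
      · rintro j' hj'; simp at hj'; omega
      · cases b <;> simp <;>
          [simpa [Sg, mul_assoc] using iC2 i; simpa [Sg, mul_assoc] using relC2 i]
    · have hj_le : j ≤ i := by omega
      rcases Nat.eq_or_lt_of_le hj_le with heq2 | hlt2
      · -- j = i
        subst heq2
        refine ⟨some (j + 1), [(BVGen.s j, b), (BVGen.s (j + 1), b)], ?_, ?_, ?_⟩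
        · rintro q hq; simp at hq
          rcases hq with h | h <;> subst h <;> exact mem_s (by omega)
        · rintro j' hj'; simp at hj'; omega
        · cases b <;> simp <;>
            [simpa [Sg, mul_assoc] using iC4 j; simpa [Sg, mul_assoc] using relC4 j]
      · -- j < i
        refine ⟨some j, [(BVGen.s (i + 1), b)], ?_, ?_, ?_⟩
        · rintro q hq; simp at hq; subst hq; exact mem_s (by omega)
        · rintro j' hj'; simp at hj'; omega
        · cases b <;> simp <;>
            [simpa [Sg, mul_assoc] using iC3 (by omega : j + 2 ≤ i + 1);
             simpa [Sg, mul_assoc] using relC3 (by omega : j + 2 ≤ i + 1)]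
  · -- τ letter
    obtain ⟨μ, rfl⟩ : ∃ μ, m = μ + 2 := ⟨m - 2, by omega⟩
    have hg' : g = BVGen.t μ := by simpa using hg
    subst hg'
    have hjμ : j ≤ μ := by omega
    rcases Nat.eq_or_lt_of_le hjμ with heq | hlt
    · -- j = μ : absorption
      subst heq
      refine ⟨none, [(BVGen.s j, b), (BVGen.t (j + 1), b)], ?_, ?_, ?_⟩
      · rintro q hq; simp at hq
        rcases hq with h | h <;> subst h
        · exact mem_s (by omega)
        · exact mem_t2
      · rintro j' hj'; simp at hj'
      · cases b <;> simp <;>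
          [simpa [Sg, Tg, mul_assoc] using iD2 j; simpa [Sg, Tg, mul_assoc] using relD2 j]
    · -- j < μ
      refine ⟨some j, [(BVGen.t (μ + 1), b)], ?_, ?_, ?_⟩
      · rintro q hq; simp at hq; subst hq; exact mem_t2
      · rintro j' hj'; simp at hj'; omega
      · cases b <;> simp <;>
          [simpa [Tg, mul_assoc] using iD1 (by omega : j + 2 ≤ μ + 1);
           simpa [Tg, mul_assoc] using relD1 (by omega : j + 2 ≤ μ + 1)]

end GBVAux
namespace GBVAux
open GBV BVGen

lemma levelStep (W : List Ltr) {m : ℕ} :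
    ∀ (o : Option ℕ), (∀ p ∈ W, p.1 ∈ BnGen m) → (∀ j ∈ o, j + 2 ≤ m) →
    ∃ (o' : Option ℕ) (W' : List Ltr),
      (∀ p ∈ W', p.1 ∈ BnGen (m + 1)) ∧ (∀ j ∈ o', j + 2 ≤ m) ∧
      evalW W * evalO o = evalO o' * evalW W' := by
  induction W using List.reverseRecOn with
  | nil =>
    intro o _ ho
    exact ⟨o, [], by simp, ho, by simp⟩
  | append_singleton W₀ p ih =>
    intro o hW ho
    have hW₀ : ∀ q ∈ W₀, q.1 ∈ BnGen m := fun q hq => hW q (by simp [hq])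
    have hp : p.1 ∈ BnGen m := hW p (by simp)
    rcases o with _ | j
    · -- no incoming x
      rcases mem_elim hp with ⟨i, hi, hgs⟩ | ⟨hm, hgt⟩
      · obtain ⟨o', W₀', h1, h2, h3⟩ := ih none hW₀ (by simp)
        refine ⟨o', W₀' ++ [p], ?_, h2, ?_⟩
        · intro q hq
          rcases List.mem_append.mp hq with h | h
          · exact h1 q h
          · simp at h; subst h; exact mem_mono hgs hp
        · simp only [evalW_append, evalO_none, mul_one] at h3 ⊢
          rw [← mul_assoc, h3, mul_assoc]
      · -- τ letter : expand
        obtain ⟨μ, rfl⟩ : ∃ μ, m = μ + 2 := ⟨m - 2, by omega⟩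
        have hg' : p.1 = BVGen.t μ := by simpa using hgt
        obtain ⟨o', W₀', h1, h2, h3⟩ := ih (some μ) hW₀ (by simp)
        refine ⟨o', W₀' ++ [(BVGen.t (μ + 1), p.2), (BVGen.s μ, p.2)], ?_, ?_, ?_⟩
        · intro q hq
          rcases List.mem_append.mp hq with h | h
          · exact h1 q h
          · simp at h
            rcases h with h | h <;> rw [h]
            · exact mem_t2
            · exact mem_s (by omega)
        · intro j hj; exact le_trans (h2 j hj) (by omega)
        · have hexp : evalL p = xg μ * (evalL (BVGen.t (μ + 1), p.2) * evalL (BVGen.s μ, p.2)) := by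
            obtain ⟨g, b⟩ := p
            simp only at hg'
            subst hg'
            cases b
            · simpa [Tg, Sg, mul_assoc] using iD3 μ
            · simpa [Tg, Sg, mul_assoc] using relD3 μ
          simp only [evalW_append, evalW_cons, evalW_nil, evalO_none, mul_one, evalO_some] at h3 ⊢
          rw [hexp]
          calc evalW W₀ * (xg μ * (evalL (BVGen.t (μ + 1), p.2) * evalL (BVGen.s μ, p.2)))
              = (evalW W₀ * xg μ) * (evalL (BVGen.t (μ + 1), p.2) * evalL (BVGen.s μ, p.2)) := by
                rw [mul_assoc]
            _ = evalO o' * evalW W₀' * (evalL (BVGen.t (μ + 1), p.2) * evalL (BVGen.s μ, p.2)) := by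
                rw [h3]
            _ = evalO o' * (evalW W₀' * (evalL (BVGen.t (μ + 1), p.2) * evalL (BVGen.s μ, p.2))) := by
                rw [mul_assoc]
    · -- incoming x_j
      have hj : j + 2 ≤ m := ho j (by simp)
      obtain ⟨o₁, u, hu, ho₁, hev⟩ := cross p hp hj
      obtain ⟨o', W₀', h1, h2, h3⟩ := ih o₁ hW₀ ho₁
      refine ⟨o', W₀' ++ u, ?_, h2, ?_⟩
      · intro q hq
        rcases List.mem_append.mp hq with h | h
        · exact h1 q h
        · exact hu q h
      · simp only [evalW_append, evalW_cons, evalW_nil, mul_one, evalO_some] at h3 ⊢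
        calc evalW W₀ * evalL p * xg j = evalW W₀ * (evalL p * xg j) := by rw [mul_assoc]
          _ = evalW W₀ * (evalO o₁ * evalW u) := by rw [hev]
          _ = (evalW W₀ * evalO o₁) * evalW u := by rw [mul_assoc]
          _ = (evalO o' * evalW W₀') * evalW u := by rw [h3]
          _ = evalO o' * (evalW W₀' * evalW u) := by rw [mul_assoc]

lemma optP (o : Option ℕ) : evalO o = evalX o.toList := by
  cases o <;> simp [evalO, evalX]

lemma levels (k : ℕ) : ∀ (W : List Ltr) (m : ℕ) (o : Option ℕ),
    (∀ p ∈ W, p.1 ∈ BnGen m) → (∀ j ∈ o, j + 2 ≤ m) →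
    ∃ (P : List ℕ) (W' : List Ltr),
      (∀ p ∈ W', p.1 ∈ BnGen (m + k + 1)) ∧
      evalW W * evalO o = evalX P * evalW W' ∧
      (∀ acc, acc ≤ m - 1 → Nfold P acc ≤ m + k) := by
  induction k with
  | zero =>
    intro W m o hW ho
    obtain ⟨o', W', h1, h2, h3⟩ := levelStep W o hW ho
    refine ⟨o'.toList, W', h1, by rwa [← optP], ?_⟩
    intro acc hacc
    cases o' with
    | none => simpa using (by omega : acc ≤ m + 0)
    | some j' =>
      have := h2 j' (by simp)
      simp only [Option.toList_some, Nfold_cons, Nfold_nil, Nf]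
      omega
  | succ k ih =>
    intro W m o hW ho
    obtain ⟨o₁, W₁, h1, h2, h3⟩ := levelStep W o hW ho
    obtain ⟨P₂, W₂, g1, g2, g3⟩ := ih W₁ (m + 1) none h1 (by simp)
    refine ⟨o₁.toList ++ P₂, W₂, ?_, ?_, ?_⟩
    · intro p hp
      have := g1 p hp
      convert this using 2
      omega
    · simp only [evalO_none, mul_one] at g2
      rw [h3, evalX_append, mul_assoc, ← g2, optP]
    · intro acc hacc
      rw [Nfold_append]
      have hstep : Nfold o₁.toList acc ≤ m := by
        cases o₁ with
        | none => simpa using (by omega : acc ≤ m)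
        | some j' =>
          have := h2 j' (by simp)
          simp only [Option.toList_some, Nfold_cons, Nfold_nil, Nf]
          omega
      have := g3 (Nfold o₁.toList acc) (by omega)
      omega

lemma mainPush (W : List Ltr) (n : ℕ) (hW : ∀ p ∈ W, p.1 ∈ BnGen n) (M : ℕ) :
    ∃ (n' : ℕ) (P : List ℕ) (W' : List Ltr),
      n + 1 ≤ n' ∧ (∀ p ∈ W', p.1 ∈ BnGen n') ∧
      evalW W * xg M = evalX P * evalW W' ∧
      (∀ acc, acc ≤ n - 1 → Nfold P acc ≤ n' - 1) := by
  set K := max n (M + 2) with hK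
  obtain ⟨P₁, W₁, h1, h2, h3⟩ := levels (K - n) W n none hW (by simp)
  have hKn : n + (K - n) = K := by omega
  rw [hKn] at h1 h3
  obtain ⟨P₂, W₂, g1, g2, g3⟩ := levels 0 W₁ (K + 1) (some M) h1
    (by intro j hj; simp at hj; omega)
  refine ⟨K + 2, P₁ ++ P₂, W₂, by omega, ?_, ?_, ?_⟩
  · intro p hp
    exact g1 p hp
  · simp only [evalO_none, mul_one] at h2
    simp only [evalO_some] at g2
    rw [evalX_append, mul_assoc, ← g2, ← mul_assoc, ← h2]
  · intro acc hacc
    rw [Nfold_append]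
    have e1 := h3 acc hacc
    have e2 := g3 (Nfold P₁ acc) (by omega)
    omega

end GBVAux
namespace GBVAux
open GBV BVGen

lemma posBumpInv {b : ℕ} : ∀ (l : List ℕ), (∀ e ∈ l, b < e) →
    (evalX l)⁻¹ * xg b = xg b * (evalX (l.map (· + 1)))⁻¹ := by
  intro l
  induction l with
  | nil => intro _; simp
  | cons c r ih =>
    intro hall
    have hc : b < c := hall c (by simp)
    calc (evalX (c :: r))⁻¹ * xg b
        = (evalX r)⁻¹ * ((xg c)⁻¹ * xg b) := by
          simp [mul_inv_rev, mul_assoc]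
      _ = (evalX r)⁻¹ * (xg b * (xg (c + 1))⁻¹) := by rw [iA2 hc]
      _ = ((evalX r)⁻¹ * xg b) * (xg (c + 1))⁻¹ := by rw [mul_assoc]
      _ = (xg b * (evalX (r.map (· + 1)))⁻¹) * (xg (c + 1))⁻¹ := by
          rw [ih (fun e he => hall e (by simp [he]))]
      _ = xg b * (evalX ((c :: r).map (· + 1)))⁻¹ := by
          simp [mul_inv_rev, mul_assoc]

lemma pushInv : ∀ (l : List ℕ), l.Pairwise (· ≤ ·) → ∀ (b : ℕ),
    (∃ l', List.Sublist l' l ∧ l.length = l'.length + 1 ∧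
       (evalX l)⁻¹ * xg b = (evalX l')⁻¹) ∨
    (∃ M l', l'.Pairwise (· ≤ ·) ∧ l'.length = l.length ∧
       (∀ acc, Nfold l' acc ≤ Nfold l acc + 1) ∧
       (∀ e ∈ l', ∃ e₀ ∈ l, e₀ ≤ e) ∧
       (evalX l)⁻¹ * xg b = xg M * (evalX l')⁻¹) := by
  intro l
  induction l with
  | nil =>
    intro _ b
    exact Or.inr ⟨b, [], by simp, rfl, fun acc => by simp, by simp, by simp⟩
  | cons c rest ih =>
    intro hp b
    have hrest := hp.of_cons
    have hchead : ∀ e ∈ rest, c ≤ e := fun e he => (List.pairwise_cons.mp hp).1 e he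
    rcases Nat.lt_trichotomy b c with hbc | hbc | hbc
    · -- b < c : pass with bump of everything
      refine Or.inr ⟨b, (c :: rest).map (· + 1), ?_, by simp, ?_, ?_, ?_⟩
      · exact hp.map _ (fun a b hab => by omega)
      · intro acc; exact Nfold_map_succ _ (by omega)
      · intro e he
        simp only [List.mem_map] at he
        obtain ⟨e₀, he₀, rfl⟩ := he
        exact ⟨e₀, he₀, by omega⟩
      · exact posBumpInv (c :: rest)
          (fun e he => by rcases List.mem_cons.mp he with h | h; omega; exact lt_of_lt_of_le hbc (hchead e h))
    · -- b = c : cancellation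
      subst hbc
      refine Or.inl ⟨rest, List.sublist_cons_self _ _, by simp, ?_⟩
      simp [mul_inv_rev, mul_assoc]
    · -- c < b
      rcases ih hrest (b + 1) with ⟨r', hsub, hlen, hev⟩ | ⟨M, r', hpair, hlen, hNf, hdom, hev⟩
      · refine Or.inl ⟨c :: r', hsub.cons₂ c, by simp [hlen], ?_⟩
        calc (evalX (c :: rest))⁻¹ * xg b
            = (evalX rest)⁻¹ * ((xg c)⁻¹ * xg b) := by simp [mul_inv_rev, mul_assoc]
          _ = (evalX rest)⁻¹ * (xg (b + 1) * (xg c)⁻¹) := by rw [iA1 hbc]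
          _ = ((evalX rest)⁻¹ * xg (b + 1)) * (xg c)⁻¹ := by rw [mul_assoc]
          _ = (evalX r')⁻¹ * (xg c)⁻¹ := by rw [hev]
          _ = (evalX (c :: r'))⁻¹ := by simp [mul_inv_rev]
      · refine Or.inr ⟨M, c :: r', ?_, by simp [hlen], ?_, ?_, ?_⟩
        · refine List.pairwise_cons.mpr ⟨?_, hpair⟩
          intro e he
          obtain ⟨e₀, he₀, hle⟩ := hdom e he
          exact le_trans (hchead e₀ he₀) hle
        · intro acc
          simp only [Nfold_cons]
          exact hNf (Nf acc c)
        · intro e he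
          rcases List.mem_cons.mp he with h | h
          · exact ⟨c, by simp, by omega⟩
          · obtain ⟨e₀, he₀, hle⟩ := hdom e h
            exact ⟨e₀, by simp [he₀], hle⟩
        · calc (evalX (c :: rest))⁻¹ * xg b
              = (evalX rest)⁻¹ * ((xg c)⁻¹ * xg b) := by simp [mul_inv_rev, mul_assoc]
            _ = (evalX rest)⁻¹ * (xg (b + 1) * (xg c)⁻¹) := by rw [iA1 hbc]
            _ = ((evalX rest)⁻¹ * xg (b + 1)) * (xg c)⁻¹ := by rw [mul_assoc]
            _ = (xg M * (evalX r')⁻¹) * (xg c)⁻¹ := by rw [hev]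
            _ = xg M * (evalX (c :: r'))⁻¹ := by simp [mul_inv_rev, mul_assoc]

/-! ### sorted insertion -/

def insert1 : List ℕ → ℕ → List ℕ
  | [], j => [j]
  | c :: rest, j => if c ≤ j then c :: insert1 rest j else j :: ((c :: rest).map (· + 1))

@[simp] lemma insert1_nil (j : ℕ) : insert1 [] j = [j] := rfl

lemma insert1_cons_le {c j : ℕ} (h : c ≤ j) (rest : List ℕ) :
    insert1 (c :: rest) j = c :: insert1 rest j := by simp [insert1, h]

lemma insert1_cons_gt {c j : ℕ} (h : ¬ c ≤ j) (rest : List ℕ) :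
    insert1 (c :: rest) j = j :: ((c :: rest).map (· + 1)) := by simp [insert1, h]

lemma posBump {j : ℕ} : ∀ (l : List ℕ), (∀ e ∈ l, j < e) →
    evalX l * xg j = xg j * evalX (l.map (· + 1)) := by
  intro l
  induction l with
  | nil => simp
  | cons c r ih =>
    intro hall
    have hc : j < c := hall c (by simp)
    calc evalX (c :: r) * xg j
        = xg c * (evalX r * xg j) := by simp [mul_assoc]
      _ = xg c * (xg j * evalX (r.map (· + 1))) := by rw [ih (fun e he => hall e (by simp [he]))]
      _ = (xg c * xg j) * evalX (r.map (· + 1)) := by rw [mul_assoc]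
      _ = (xg j * xg (c + 1)) * evalX (r.map (· + 1)) := by rw [relA hc]
      _ = xg j * evalX ((c :: r).map (· + 1)) := by simp [mul_assoc]

lemma insert1_mem : ∀ (l : List ℕ) (j : ℕ), ∀ e ∈ insert1 l j,
    e = j ∨ ∃ e₀ ∈ l, e = e₀ ∨ e = e₀ + 1 := by
  intro l
  induction l with
  | nil => intro j e he; simp at he; exact Or.inl he
  | cons c rest ih =>
    intro j e he
    by_cases h : c ≤ j
    · rw [insert1_cons_le h] at he
      rcases List.mem_cons.mp he with h' | h'
      · exact Or.inr ⟨c, by simp, Or.inl h'⟩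
      · rcases ih j e h' with h'' | ⟨e₀, he₀, h''⟩
        · exact Or.inl h''
        · exact Or.inr ⟨e₀, by simp [he₀], h''⟩
    · rw [insert1_cons_gt h] at he
      rcases List.mem_cons.mp he with h' | h'
      · exact Or.inl h'
      · simp only [List.mem_map] at h'
        obtain ⟨e₀, he₀, rfl⟩ := h'
        exact Or.inr ⟨e₀, he₀, Or.inr rfl⟩

lemma insert1_pairwise : ∀ (l : List ℕ), l.Pairwise (· ≤ ·) → ∀ j,
    (insert1 l j).Pairwise (· ≤ ·) := by
  intro l
  induction l with
  | nil => intro _ j; simp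
  | cons c rest ih =>
    intro hp j
    have hrest := hp.of_cons
    have hchead : ∀ e ∈ rest, c ≤ e := fun e he => (List.pairwise_cons.mp hp).1 e he
    by_cases h : c ≤ j
    · rw [insert1_cons_le h]
      refine List.pairwise_cons.mpr ⟨?_, ih hrest j⟩
      intro e he
      rcases insert1_mem rest j e he with h' | ⟨e₀, he₀, h'⟩
      · omega
      · have := hchead e₀ he₀; omega
    · rw [insert1_cons_gt h]
      refine List.pairwise_cons.mpr ⟨?_, ?_⟩
      · intro e he
        simp only [List.mem_map] at he
        obtain ⟨e₀, he₀, rfl⟩ := he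
        rcases List.mem_cons.mp he₀ with h' | h'
        · omega
        · have := hchead e₀ h'; omega
      · exact hp.map _ (fun a b hab => by omega)

lemma insert1_eval : ∀ (l : List ℕ), l.Pairwise (· ≤ ·) → ∀ j,
    evalX l * xg j = evalX (insert1 l j) := by
  intro l
  induction l with
  | nil => intro _ j; simp
  | cons c rest ih =>
    intro hp j
    have hrest := hp.of_cons
    have hchead : ∀ e ∈ rest, c ≤ e := fun e he => (List.pairwise_cons.mp hp).1 e he
    by_cases h : c ≤ j
    · rw [insert1_cons_le h]
      calc evalX (c :: rest) * xg j = xg c * (evalX rest * xg j) := by simp [mul_assoc]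
        _ = xg c * evalX (insert1 rest j) := by rw [ih hrest j]
        _ = evalX (c :: insert1 rest j) := by simp
    · rw [insert1_cons_gt h]
      have : ∀ e ∈ c :: rest, j < e := by
        intro e he
        rcases List.mem_cons.mp he with h' | h'
        · omega
        · have := hchead e h'; omega
      rw [posBump _ this]
      simp

lemma Nfold_swap {j : ℕ} : ∀ (L : List ℕ), (∀ e ∈ L, j < e) → ∀ acc,
    Nfold (j :: L.map (· + 1)) acc = Nfold (L ++ [j]) acc := by
  intro L
  induction L with
  | nil => intro _ acc; rfl
  | cons c R ih =>
    intro hall acc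
    have hc : j < c := hall c (by simp)
    have key : Nf (Nf acc j) (c + 1) = Nf (Nf acc c) j := by
      simp only [Nf]; omega
    calc Nfold (j :: (c :: R).map (· + 1)) acc
        = Nfold (R.map (· + 1)) (Nf (Nf acc j) (c + 1)) := rfl
      _ = Nfold (R.map (· + 1)) (Nf (Nf acc c) j) := by rw [key]
      _ = Nfold (j :: R.map (· + 1)) (Nf acc c) := rfl
      _ = Nfold (R ++ [j]) (Nf acc c) := ih (fun e he => hall e (by simp [he])) _
      _ = Nfold ((c :: R) ++ [j]) acc := rfl

lemma insert1_Nfold : ∀ (l : List ℕ), l.Pairwise (· ≤ ·) → ∀ j acc,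
    Nfold (insert1 l j) acc = Nfold (l ++ [j]) acc := by
  intro l
  induction l with
  | nil => intro _ j acc; rfl
  | cons c rest ih =>
    intro hp j acc
    have hrest := hp.of_cons
    have hchead : ∀ e ∈ rest, c ≤ e := fun e he => (List.pairwise_cons.mp hp).1 e he
    by_cases h : c ≤ j
    · rw [insert1_cons_le h]
      simp only [Nfold_cons, List.cons_append]
      exact ih hrest j _
    · rw [insert1_cons_gt h]
      exact Nfold_swap (c :: rest) (by
        intro e he
        rcases List.mem_cons.mp he with h' | h'
        · omega
        · have := hchead e h'; omega) acc

def insertAll (l : List ℕ) (P : List ℕ) : List ℕ := P.foldl insert1 l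

@[simp] lemma insertAll_nil (l : List ℕ) : insertAll l [] = l := rfl

lemma insertAll_cons (l : List ℕ) (q : ℕ) (P : List ℕ) :
    insertAll l (q :: P) = insertAll (insert1 l q) P := rfl

lemma insertAll_pairwise : ∀ (P : List ℕ) (l : List ℕ), l.Pairwise (· ≤ ·) →
    (insertAll l P).Pairwise (· ≤ ·) := by
  intro P
  induction P with
  | nil => intro l hl; simpa using hl
  | cons q P ih =>
    intro l hl
    rw [insertAll_cons]
    exact ih _ (insert1_pairwise l hl q)

lemma insertAll_eval : ∀ (P : List ℕ) (l : List ℕ), l.Pairwise (· ≤ ·) →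
    evalX (insertAll l P) = evalX l * evalX P := by
  intro P
  induction P with
  | nil => intro l _; simp
  | cons q P ih =>
    intro l hl
    rw [insertAll_cons, ih _ (insert1_pairwise l hl q), ← insert1_eval l hl q]
    simp [mul_assoc]

lemma insertAll_Nfold : ∀ (P : List ℕ) (l : List ℕ), l.Pairwise (· ≤ ·) → ∀ acc,
    Nfold (insertAll l P) acc = Nfold (l ++ P) acc := by
  intro P
  induction P with
  | nil => intro l _ acc; simp
  | cons q P ih =>
    intro l hl acc
    rw [insertAll_cons, ih _ (insert1_pairwise l hl q) acc]
    rw [Nfold_append, Nfold_append, insert1_Nfold l hl q, Nfold_append]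
    rfl

/-! ### inverse words -/

def invWord (W : List Ltr) : List Ltr := (W.map (fun p => (p.1, !p.2))).reverse

lemma invWord_eval : ∀ (W : List Ltr), evalW (invWord W) = (evalW W)⁻¹ := by
  intro W
  induction W with
  | nil => simp [invWord]
  | cons p W ih =>
    have : invWord (p :: W) = invWord W ++ [(p.1, !p.2)] := by simp [invWord]
    rw [this, evalW_append, ih, evalW_cons]
    have : evalL (p.1, !p.2) = (evalL p)⁻¹ := by
      obtain ⟨g, b⟩ := p
      cases b <;> simp
    rw [this]
    simp [mul_inv_rev]

lemma invWord_mem {W : List Ltr} {m : ℕ} (hW : ∀ p ∈ W, p.1 ∈ BnGen m) :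
    ∀ p ∈ invWord W, p.1 ∈ BnGen m := by
  intro p hp
  simp only [invWord, List.mem_reverse, List.mem_map] at hp
  obtain ⟨q, hq, rfl⟩ := hp
  exact hW q hq

end GBVAux
namespace GBVAux
open GBV BVGen

lemma chain_iff (l : List ℕ) : l.Chain' (· ≤ ·) ↔ l.Pairwise (· ≤ ·) :=
  List.isChain_iff_pairwise

end GBVAux

open GBVAux GBV BVGen in
theorem bv_squish' (w v : GBV.Block) (h : 1 ≤ w.w3.length + v.w1.length) :
    ∃ w' v' : GBV.Block,
      w.eval * v.eval = w'.eval * v'.eval ∧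
      v'.w1.length + w'.w3.length < v.w1.length + w.w3.length := by
  cases hv1 : v.w1 with
  | cons b tb =>
    -- Case A : v.w1 = b :: tb; move x_b into the block w
    have hv1c : (b :: tb).Chain' (· ≤ ·) := by rw [← hv1]; exact v.h1
    have hvb : max (Nval (b :: tb)) (Nval v.w3) + 1 ≤ v.n := by rw [← hv1]; exact v.hbound
    have htb : Nval tb ≤ Nval (b :: tb) := by
      rw [Nval_eq_Nfold, Nval_eq_Nfold]
      exact Nfold_sublist (List.sublist_cons_self b tb) 0
    refine ?_
    have v' : GBV.Block :=
      ⟨tb, v.w2, v.w3, v.n, (chain_iff _).mpr ((chain_iff _).mp hv1c).of_cons, v.h3, v.h2,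
        by omega⟩
    rcases pushInv w.w3 ((chain_iff _).mp w.h3) b with
      ⟨l', hsub, hlen, hev⟩ | ⟨M, l', hpair, hlen, hNf, hdom, hev⟩
    · -- cancellation in w.w3
      have hwb := w.hbound
      have hl'N : Nval l' ≤ Nval w.w3 := by
        rw [Nval_eq_Nfold, Nval_eq_Nfold]; exact Nfold_sublist hsub 0
      refine ⟨⟨w.w1, w.w2, l', w.n, w.h1,
          (chain_iff _).mpr (((chain_iff _).mp w.h3).sublist hsub), w.h2, by omega⟩,
        ⟨tb, v.w2, v.w3, v.n, (chain_iff _).mpr ((chain_iff _).mp hv1c).of_cons, v.h3, v.h2,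
          by omega⟩, ?_, ?_⟩
    
      · simp only [Block.eval, hv1, evalX_cons, mul_assoc]
        rw [ctx1 hev]
      · simp only [List.length_cons]
        omega
    · -- pass through : x_M must cross w.w2
      obtain ⟨n', P, W', hn', hW', hevP, hNP⟩ := mainPush w.w2 w.n w.h2 M
      have hwb := w.hbound
      have hw1p : w.w1.Pairwise (· ≤ ·) := (chain_iff _).mp w.h1
      have hNins : Nval (insertAll w.w1 P) = Nfold P (Nval w.w1) := by
        rw [Nval_eq_Nfold, insertAll_Nfold P w.w1 hw1p, Nfold_append, ← Nval_eq_Nfold]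
      have hN1 : Nfold P (Nval w.w1) ≤ n' - 1 := hNP _ (by omega)
      have hN3 : Nval l' ≤ Nval w.w3 + 1 := by
        rw [Nval_eq_Nfold, Nval_eq_Nfold]; exact hNf 0
      refine ⟨⟨insertAll w.w1 P, W', l', n',
          (chain_iff _).mpr (insertAll_pairwise P w.w1 hw1p),
          (chain_iff _).mpr hpair, hW', by omega⟩,
        ⟨tb, v.w2, v.w3, v.n, (chain_iff _).mpr ((chain_iff _).mp hv1c).of_cons, v.h3, v.h2,
          by omega⟩, ?_, ?_⟩
      · simp only [Block.eval, hv1, evalX_cons, mul_assoc]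
        rw [ctx2 hev, ctx2 hevP, insertAll_eval P w.w1 hw1p, mul_assoc]
      · simp only [List.length_cons]
        omega
  | nil =>
    -- Case B : v.w1 = [], so w.w3 is nonempty
    cases hw3 : w.w3 with
    | nil => rw [hv1, hw3] at h; simp at h
    | cons c t3 =>
      have hw3c : (c :: t3).Chain' (· ≤ ·) := by rw [← hw3]; exact w.h3
      have hwb : max (Nval w.w1) (Nval (c :: t3)) + 1 ≤ w.n := by rw [← hw3]; exact w.hbound
      have ht3 : Nval t3 ≤ Nval (c :: t3) := by
        rw [Nval_eq_Nfold, Nval_eq_Nfold]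
        exact Nfold_sublist (List.sublist_cons_self c t3) 0
      obtain ⟨n', P, W', hn', hW', hevP, hNP⟩ :=
        mainPush (invWord v.w2) v.n (invWord_mem v.h2) c
      have hvb := v.hbound
      have hv3p : v.w3.Pairwise (· ≤ ·) := (chain_iff _).mp v.h3
      have hNins : Nval (insertAll v.w3 P) = Nfold P (Nval v.w3) := by
        rw [Nval_eq_Nfold, insertAll_Nfold P v.w3 hv3p, Nfold_append, ← Nval_eq_Nfold]
      have hN1 : Nfold P (Nval v.w3) ≤ n' - 1 := hNP _ (by omega)
      have hkey : (xg c)⁻¹ * evalW v.w2 = evalW (invWord W') * (evalX P)⁻¹ := by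
        have h2 := congrArg Inv.inv hevP
        simp only [mul_inv_rev, invWord_eval, inv_inv] at h2
        rw [invWord_eval W']
        exact h2
      have hkey2 : (evalX P)⁻¹ * (evalX v.w3)⁻¹ = (evalX (insertAll v.w3 P))⁻¹ := by
        rw [insertAll_eval P v.w3 hv3p, mul_inv_rev]
      refine ⟨⟨w.w1, w.w2, t3, w.n, w.h1,
          (chain_iff _).mpr ((chain_iff _).mp hw3c).of_cons, w.h2, by omega⟩,
        ⟨[], invWord W', insertAll v.w3 P, n', (chain_iff _).mpr List.Pairwise.nil,
          (chain_iff _).mpr (insertAll_pairwise P v.w3 hv3p), invWord_mem hW', by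
            have h0 : Nval ([] : List ℕ) = 0 := rfl
            have hx : Nval (insertAll v.w3 P) ≤ n' - 1 := by rw [hNins]; exact hN1
            omega⟩, ?_, ?_⟩
      · simp only [Block.eval, hv1, hw3, evalX_cons, evalX_nil, mul_inv_rev, one_mul,
          mul_assoc]
        rw [ctx2 hkey]
        rw [hkey2]
      · simp only [List.length_cons, List.length_nil]
        omega

/-- Lemma (squish): the product of two blocks can be replaced by the product of
two blocks with strictly smaller `l(v₁') + l(w₃')`. -/
theorem bv_squish (w v : GBV.Block) (h : 1 ≤ w.w3.length + v.w1.length) :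
    ∃ w' v' : GBV.Block,
      w.eval * v.eval = w'.eval * v'.eval ∧
      v'.w1.length + w'.w3.length < v.w1.length + w.w3.length := by
  exact bv_squish' w v h
end
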